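/- Let q be a positive integer and Q = (q+1)/2. For every nonnegative integer α, π(θ(α)) = π(α). -/

import Mathlib

/-- Ceiling division of natural numbers: `cdiv a b = ⌈a / b⌉` (for `b > 0`). -/
def cdiv (a b : ℕ) : ℕ := (a + b - 1) / b

/-- `⌈Q⌉` where `Q = (q+1)/2`. -/
def Qceil (q : ℕ) : ℕ := cdiv (q + 1) 2

/-- `⌊Q⌋` where `Q = (q+1)/2`. -/
def Qfloor (q : ℕ) : ℕ := (q + 1) / 2

/-- `π(Δ) = ⌈Δ/q⌉` if `Δ ≤ q`, and `π(Δ) = ⌈(Δ−q)/⌈Q⌉⌉ + 1` if `Δ > q`. -/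
def piF (q Δ : ℕ) : ℕ := if Δ ≤ q then cdiv Δ q else cdiv (Δ - q) (Qceil q) + 1

/-- `θ(α) = π(α)` if `α ≤ q`, and `θ(α) = (π(α)−1)·⌈Q⌉ + ⌊Q⌋` if `α > q`. -/
def thetaF (q α : ℕ) : ℕ := if α ≤ q then piF q α else (piF q α - 1) * Qceil q + Qfloor q

lemma cdiv_zero' (q : ℕ) (hq : 0 < q) : cdiv 0 q = 0 := by
  unfold cdiv
  exact Nat.div_eq_of_lt (by omega)

lemma cdiv_one_of (q α : ℕ) (h1 : 1 ≤ α) (h2 : α ≤ q) : cdiv α q = 1 := by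
  unfold cdiv
  exact Nat.div_eq_of_lt_le (by omega) (by omega)

/-- `π(θ(α)) = π(α)` for every nonnegative integer `α`. -/
theorem pi_theta_eq_pi (q : ℕ) (hq : 0 < q) (α : ℕ) : piF q (thetaF q α) = piF q α := by
  by_cases h : α ≤ q
  · have hθ : thetaF q α = cdiv α q := by simp [thetaF, piF, h]
    rcases Nat.eq_zero_or_pos α with h0 | h0
    · subst h0
      rw [hθ, cdiv_zero' q hq]
    · have hc : cdiv α q = 1 := cdiv_one_of q α h0 h
      have hπα : piF q α = 1 := by simp [piF, h, hc]
      rw [hθ, hc, hπα, piF, if_pos (show (1:ℕ) ≤ q from hq), cdiv_one_of q 1 le_rfl hq]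
  · -- α > q
    set C := Qceil q with hCdef
    set F := Qfloor q with hFdef
    have hCval : C = (q + 2) / 2 := by simp [hCdef, Qceil, cdiv]
    have hFval : F = (q + 1) / 2 := rfl
    have hCF : C + F = q + 1 := by omega
    have hC : 0 < C := by omega
    set k := cdiv (α - q) C with hkdef
    have hk : 1 ≤ k := by
      rw [hkdef]
      unfold cdiv
      rw [Nat.one_le_div_iff hC]
      omega
    have hπα : piF q α = k + 1 := by simp [piF, h, hkdef]; rfl
    have hθ : thetaF q α = k * C + F := by
      simp [thetaF, h, hπα]; rfl
    have hCk : C ≤ k * C := Nat.le_mul_of_pos_left C hk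
    have hmul : k * C = (k - 1) * C + C := by
      rw [Nat.sub_one_mul]; omega
    have hθgt : ¬ (k * C + F ≤ q) := by omega
    have hsub : k * C + F - q = (k - 1) * C + 1 := by omega
    rw [hθ, hπα, piF, if_neg hθgt, hsub]
    have hlast : cdiv ((k - 1) * C + 1) C = k := by
      unfold cdiv
      have he : (k - 1) * C + 1 + C - 1 = k * C := by omega
      rw [he, Nat.mul_div_cancel k hC]
    rw [hlast]
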